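/- arXiv:math-ph/0507005 — 4 statements merged into one kernel-verified Lean document; each statement's English description precedes it below -/
import Mathlib

section
/- Let α > 0 and 0 < γ < 1, and let g : ℝ → ℝ be a bounded, non-constant differentiable function satisfying the first-order equation α g'(ξ) = sin g(ξ) + γ for all ξ ∈ ℝ (the travelling-wave equation for velocity v = 1). Then g is strictly monotone, the limits L₋ := lim_{ξ→−∞} g(ξ) and L₊ := lim_{ξ→+∞} g(ξ) exist and satisfy sin L₋ = −γ = sin L₊, and moreover L₋ ≡ −arcsin γ (mod 2π) and L₊ ≡ π + arcsin γ (mod 2π). -/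
open Real Filter Topology

lemma sin_cos_eq_int' (x y : ℝ) (hs : Real.sin x = Real.sin y) (hc : Real.cos x = Real.cos y) :
    ∃ k : ℤ, x = y + 2 * k * π := by
  have h1 : Real.cos (x - y) = 1 := by
    rw [Real.cos_sub, hs, hc]
    nlinarith [Real.sin_sq_add_cos_sq y]
  obtain ⟨n, hn⟩ := (Real.cos_eq_one_iff _).1 h1
  exact ⟨n, by linarith⟩

lemma sin_strictMonoOn_near' {L : ℝ} (h : 0 < Real.cos L) :
    ∃ ε > 0, StrictMonoOn Real.sin (Set.Ioo (L - ε) (L + ε)) := by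
  have hev : ∀ᶠ u in 𝓝 L, 0 < Real.cos u :=
    Real.continuous_cos.continuousAt.eventually (eventually_gt_nhds h)
  obtain ⟨ε, hε, hball⟩ := Metric.eventually_nhds_iff.mp hev
  refine ⟨ε, hε, strictMonoOn_of_deriv_pos (convex_Ioo _ _) Real.continuous_sin.continuousOn ?_⟩
  intro x hx
  rw [interior_Ioo] at hx
  rw [Real.deriv_sin]
  exact hball (by rw [Real.dist_eq, abs_lt]; exact ⟨by linarith [hx.1], by linarith [hx.2]⟩)

lemma sin_strictAntiOn_near' {L : ℝ} (h : Real.cos L < 0) :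
    ∃ ε > 0, StrictAntiOn Real.sin (Set.Ioo (L - ε) (L + ε)) := by
  have hev : ∀ᶠ u in 𝓝 L, Real.cos u < 0 :=
    Real.continuous_cos.continuousAt.eventually (eventually_lt_nhds h)
  obtain ⟨ε, hε, hball⟩ := Metric.eventually_nhds_iff.mp hev
  refine ⟨ε, hε, strictAntiOn_of_deriv_neg (convex_Ioo _ _) Real.continuous_sin.continuousOn ?_⟩
  intro x hx
  rw [interior_Ioo] at hx
  rw [Real.deriv_sin]
  exact hball (by rw [Real.dist_eq, abs_lt]; exact ⟨by linarith [hx.1], by linarith [hx.2]⟩)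

lemma class1' (γ L : ℝ) (hγ0 : 0 < γ) (hγ1 : γ < 1) (hs : Real.sin L = -γ)
    (hc : 0 < Real.cos L) : ∃ k : ℤ, L = -Real.arcsin γ + 2 * k * π := by
  have h1 : Real.sin (-Real.arcsin γ) = -γ := by
    rw [Real.sin_neg, Real.sin_arcsin (by linarith) (by linarith)]
  have hsq : Real.cos L ^ 2 = 1 - γ ^ 2 := by nlinarith [Real.sin_sq_add_cos_sq L]
  have h2 : Real.cos (-Real.arcsin γ) = Real.cos L := by
    rw [Real.cos_neg, Real.cos_arcsin, ← hsq, Real.sqrt_sq hc.le]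
  exact sin_cos_eq_int' L (-Real.arcsin γ) (by rw [hs, h1]) h2.symm

lemma class2' (γ L : ℝ) (hγ0 : 0 < γ) (hγ1 : γ < 1) (hs : Real.sin L = -γ)
    (hc : Real.cos L < 0) : ∃ k : ℤ, L = π + Real.arcsin γ + 2 * k * π := by
  have h1 : Real.sin (π + Real.arcsin γ) = -γ := by
    rw [Real.sin_add, Real.sin_pi, Real.cos_pi, Real.sin_arcsin (by linarith) (by linarith)]
    ring
  have hsq : Real.cos L ^ 2 = 1 - γ ^ 2 := by nlinarith [Real.sin_sq_add_cos_sq L]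
  have h2 : Real.cos (π + Real.arcsin γ) = Real.cos L := by
    rw [Real.cos_add, Real.sin_pi, Real.cos_pi, Real.cos_arcsin]
    have h3 : Real.sqrt (1 - γ ^ 2) = -Real.cos L := by
      rw [← hsq, Real.sqrt_sq_eq_abs, abs_of_neg hc]
    rw [h3]; ring
  obtain ⟨k, hk⟩ := sin_cos_eq_int' L (π + Real.arcsin γ) (by rw [hs, h1]) h2.symm
  exact ⟨k, hk⟩

/-- For `α > 0`, `0 < γ < 1`, a bounded non-constant differentiable solution of
`α g' = sin g + γ` (the travelling-wave equation for `v = 1`) is strictly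
monotone, has limits `L₋`, `L₊` at `∓∞` with `sin L₋ = -γ = sin L₊`, and
`L₋ ≡ -arcsin γ (mod 2π)`, `L₊ ≡ π + arcsin γ (mod 2π)`. -/
theorem firstOrder_travellingWave_v_eq_one
    (α γ : ℝ) (hα : 0 < α) (hγ0 : 0 < γ) (hγ1 : γ < 1)
    (g : ℝ → ℝ) (hdiff : Differentiable ℝ g)
    (hbound : ∃ M : ℝ, ∀ ξ : ℝ, |g ξ| ≤ M)
    (hnc : ∃ a b : ℝ, g a ≠ g b)
    (heq : ∀ ξ : ℝ, α * deriv g ξ = Real.sin (g ξ) + γ) :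
    (StrictMono g ∨ StrictAnti g)
    ∧ ∃ Lm Lp : ℝ,
        Tendsto g atBot (𝓝 Lm) ∧ Tendsto g atTop (𝓝 Lp)
        ∧ Real.sin Lm = -γ ∧ Real.sin Lp = -γ
        ∧ (∃ k : ℤ, Lm = -Real.arcsin γ + 2 * k * π)
        ∧ (∃ k : ℤ, Lp = π + Real.arcsin γ + 2 * k * π) := by
  obtain ⟨M, hM⟩ := hbound
  have hα' : α ≠ 0 := ne_of_gt hα
  have hd : ∀ ξ, deriv g ξ = (Real.sin (g ξ) + γ) / α := fun ξ => by
    rw [eq_div_iff hα']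
    linarith [heq ξ]
  have hderiv : ∀ ξ, HasDerivAt g ((Real.sin (g ξ) + γ) / α) ξ := fun ξ =>
    hd ξ ▸ (hdiff ξ).hasDerivAt
  -- Lipschitz RHS
  have hlip : LipschitzWith ⟨α⁻¹, by positivity⟩ (fun u : ℝ => (Real.sin u + γ) / α) := by
    apply lipschitzWith_of_nnnorm_deriv_le ((Real.differentiable_sin.add_const γ).div_const α)
    intro x
    have hder : deriv (fun u : ℝ => (Real.sin u + γ) / α) x = Real.cos x / α := by
      rw [deriv_div_const, deriv_add_const, Real.deriv_sin]
    apply NNReal.coe_le_coe.mp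
    rw [coe_nnnorm, hder]
    change ‖Real.cos x / α‖ ≤ α⁻¹
    rw [Real.norm_eq_abs, abs_div,
      abs_of_pos hα, ← one_div]
    gcongr
    exact Real.abs_cos_le_one x
  -- g never hits an equilibrium
  have hne : ∀ ξ, Real.sin (g ξ) + γ ≠ 0 := by
    intro ξ₀ h0
    obtain ⟨a, b, hab⟩ := hnc
    apply hab
    have hconst : ∀ x : ℝ, g x = g ξ₀ := by
      intro x
      have hlt1 : min x ξ₀ - 1 < ξ₀ := by have := min_le_right x ξ₀; linarith
      have hlt2 : ξ₀ < max x ξ₀ + 1 := by have := le_max_right x ξ₀; linarith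
      have hx1 : min x ξ₀ - 1 ≤ x := by have := min_le_left x ξ₀; linarith
      have hx2 : x ≤ max x ξ₀ + 1 := by have := le_max_left x ξ₀; linarith
      have := ODE_solution_unique_of_mem_Icc
        (v := fun _ u => (Real.sin u + γ) / α) (s := fun _ => Set.univ)
        (fun _ _ => hlip.lipschitzOnWith)
        (⟨hlt1, hlt2⟩ : ξ₀ ∈ Set.Ioo (min x ξ₀ - 1) (max x ξ₀ + 1))
        hdiff.continuous.continuousOn
        (fun t _ => hderiv t)
        (fun _ _ => Set.mem_univ _)
        continuousOn_const
        (fun t _ => by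
          simpa [h0] using hasDerivAt_const t (g ξ₀))
        (fun _ _ => Set.mem_univ _)
        rfl
      exact this ⟨hx1, hx2⟩
    rw [hconst a, hconst b]
  -- constant sign of sin (g ξ) + γ
  have hcontf : Continuous fun ξ => Real.sin (g ξ) + γ :=
    (Real.continuous_sin.comp hdiff.continuous).add continuous_const
  have hsign : (∀ ξ, 0 < Real.sin (g ξ) + γ) ∨ (∀ ξ, Real.sin (g ξ) + γ < 0) := by
    rcases lt_or_gt_of_ne (hne 0) with h0 | h0
    · right
      intro ξ
      by_contra h
      push_neg at h
      obtain ⟨c, _, hc⟩ := intermediate_value_uIcc (a := ξ) (b := (0:ℝ))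
        (f := fun ξ => Real.sin (g ξ) + γ) hcontf.continuousOn
        (Set.mem_uIcc.mpr (Or.inr ⟨le_of_lt h0, h⟩))
      exact hne c hc
    · left
      intro ξ
      by_contra h
      push_neg at h
      obtain ⟨c, _, hc⟩ := intermediate_value_uIcc (a := ξ) (b := (0:ℝ))
        (f := fun ξ => Real.sin (g ξ) + γ) hcontf.continuousOn
        (Set.mem_uIcc.mpr (Or.inl ⟨h, le_of_lt h0⟩))
      exact hne c hc
  -- limits are equilibria
  have key : ∀ (l : Filter ℝ), l.NeBot → ∀ L : ℝ, Tendsto g l (𝓝 L) →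
      (∀ θ : ℝ → ℝ, (∀ ξ, θ ξ ∈ Set.Ioo ξ (ξ + 1)) → Tendsto θ l l) →
      Tendsto (fun ξ : ℝ => ξ + 1) l l →
      Real.sin L = -γ := by
    intro l hl L hgL hθt h1
    have hex : ∀ ξ : ℝ, ∃ θ ∈ Set.Ioo ξ (ξ + 1),
        deriv g θ = (g (ξ + 1) - g ξ) / ((ξ + 1) - ξ) := fun ξ =>
      exists_hasDerivAt_eq_slope g (deriv g) (by linarith)
        hdiff.continuous.continuousOn (fun x _ => (hdiff x).hasDerivAt)
    choose θ hθmem hθval using hex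
    have hθl : Tendsto θ l l := hθt θ hθmem
    have h2 : Tendsto (fun ξ => deriv g (θ ξ)) l (𝓝 ((Real.sin L + γ) / α)) := by
      have hc : Tendsto (fun u => (Real.sin (g u) + γ) / α) l (𝓝 ((Real.sin L + γ) / α)) :=
        (((Real.continuous_sin.tendsto L).comp hgL).add tendsto_const_nhds).div_const α
      simpa only [Function.comp_def, hd] using hc.comp hθl
    have h3 : Tendsto (fun ξ => deriv g (θ ξ)) l (𝓝 0) := by
      have h4 : Tendsto (fun ξ => (g (ξ + 1) - g ξ) / ((ξ + 1) - ξ)) l (𝓝 0) := by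
        have h5 : Tendsto (fun ξ => g (ξ + 1) - g ξ) l (𝓝 (L - L)) := (hgL.comp h1).sub hgL
        simpa using h5
      exact h4.congr fun ξ => (hθval ξ).symm
    have h6 := tendsto_nhds_unique h2 h3
    rcases div_eq_zero_iff.mp h6 with h7 | h7
    · linarith
    · exact absurd h7 hα'
  have hbdda : BddAbove (Set.range g) := ⟨M, by rintro y ⟨ξ, rfl⟩; exact (abs_le.1 (hM ξ)).2⟩
  have hbddb : BddBelow (Set.range g) := ⟨-M, by rintro y ⟨ξ, rfl⟩; exact (abs_le.1 (hM ξ)).1⟩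
  have hθtop : ∀ θ : ℝ → ℝ, (∀ ξ, θ ξ ∈ Set.Ioo ξ (ξ + 1)) → Tendsto θ atTop atTop :=
    fun θ hθ => tendsto_atTop_mono (fun ξ => (hθ ξ).1.le) tendsto_id
  have hθbot : ∀ θ : ℝ → ℝ, (∀ ξ, θ ξ ∈ Set.Ioo ξ (ξ + 1)) → Tendsto θ atBot atBot :=
    fun θ hθ => tendsto_atBot_mono (fun ξ => (hθ ξ).2.le)
      (tendsto_atBot_add_const_right _ 1 tendsto_id)
  have h1top : Tendsto (fun ξ : ℝ => ξ + 1) atTop atTop :=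
    tendsto_atTop_add_const_right _ 1 tendsto_id
  have h1bot : Tendsto (fun ξ : ℝ => ξ + 1) atBot atBot :=
    tendsto_atBot_add_const_right _ 1 tendsto_id
  rcases hsign with hpos | hneg
  · -- increasing case
    have hmono : StrictMono g := strictMono_of_deriv_pos fun ξ => by
      rw [hd]; exact div_pos (hpos ξ) hα
    set Lp := ⨆ ξ, g ξ with hLpdef
    set Lm := ⨅ ξ, g ξ with hLmdef
    have hLp : Tendsto g atTop (𝓝 Lp) := tendsto_atTop_ciSup hmono.monotone hbdda
    have hLm : Tendsto g atBot (𝓝 Lm) := tendsto_atBot_ciInf hmono.monotone hbddb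
    have hsLm : Real.sin Lm = -γ := key atBot inferInstance Lm hLm hθbot h1bot
    have hsLp : Real.sin Lp = -γ := key atTop inferInstance Lp hLp hθtop h1top
    have hltp : ∀ ξ, g ξ < Lp := fun ξ =>
      lt_of_lt_of_le (hmono (lt_add_one ξ)) (le_ciSup hbdda (ξ + 1))
    have hltm : ∀ ξ, Lm < g ξ := fun ξ =>
      lt_of_le_of_lt (ciInf_le hbddb (ξ - 1)) (hmono (sub_one_lt ξ))
    have hcosm_ne : Real.cos Lm ≠ 0 := by
      intro h
      have h2 := Real.sin_sq_add_cos_sq Lm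
      rw [h, hsLm] at h2
      nlinarith
    have hcosp_ne : Real.cos Lp ≠ 0 := by
      intro h
      have h2 := Real.sin_sq_add_cos_sq Lp
      rw [h, hsLp] at h2
      nlinarith
    have hcosm : 0 < Real.cos Lm := by
      rcases hcosm_ne.lt_or_gt with h | h
      · exfalso
        obtain ⟨ε, hε, hanti⟩ := sin_strictAntiOn_near' h
        obtain ⟨ξ, hξ⟩ := (hLm.eventually (eventually_lt_nhds
          (by linarith : Lm < Lm + ε))).exists
        have h1 : Lm ∈ Set.Ioo (Lm - ε) (Lm + ε) := ⟨by linarith, by linarith⟩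
        have h2 : g ξ ∈ Set.Ioo (Lm - ε) (Lm + ε) := ⟨by linarith [hltm ξ], hξ⟩
        have h3 := hanti h1 h2 (hltm ξ)
        rw [hsLm] at h3
        linarith [hpos ξ]
      · exact h
    have hcosp : Real.cos Lp < 0 := by
      rcases hcosp_ne.lt_or_gt with h | h
      · exact h
      · exfalso
        obtain ⟨ε, hε, hmon⟩ := sin_strictMonoOn_near' h
        obtain ⟨ξ, hξ⟩ := (hLp.eventually (eventually_gt_nhds
          (by linarith : Lp - ε < Lp))).exists
        have h1 : Lp ∈ Set.Ioo (Lp - ε) (Lp + ε) := ⟨by linarith, by linarith⟩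
        have h2 : g ξ ∈ Set.Ioo (Lp - ε) (Lp + ε) := ⟨hξ, by linarith [hltp ξ]⟩
        have h3 := hmon h2 h1 (hltp ξ)
        rw [hsLp] at h3
        linarith [hpos ξ]
    exact ⟨Or.inl hmono, Lm, Lp, hLm, hLp, hsLm, hsLp,
      class1' γ Lm hγ0 hγ1 hsLm hcosm, class2' γ Lp hγ0 hγ1 hsLp hcosp⟩
  · -- decreasing case
    have hanti : StrictAnti g := strictAnti_of_deriv_neg fun ξ => by
      rw [hd]; exact div_neg_of_neg_of_pos (hneg ξ) hα
    set Lm := ⨆ ξ, g ξ with hLmdef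
    set Lp := ⨅ ξ, g ξ with hLpdef
    have hLm : Tendsto g atBot (𝓝 Lm) := tendsto_atBot_ciSup hanti.antitone hbdda
    have hLp : Tendsto g atTop (𝓝 Lp) := tendsto_atTop_ciInf hanti.antitone hbddb
    have hsLm : Real.sin Lm = -γ := key atBot inferInstance Lm hLm hθbot h1bot
    have hsLp : Real.sin Lp = -γ := key atTop inferInstance Lp hLp hθtop h1top
    have hltm : ∀ ξ, g ξ < Lm := fun ξ =>
      lt_of_lt_of_le (hanti (sub_one_lt ξ)) (le_ciSup hbdda (ξ - 1))
    have hltp : ∀ ξ, Lp < g ξ := fun ξ =>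
      lt_of_le_of_lt (ciInf_le hbddb (ξ + 1)) (hanti (lt_add_one ξ))
    have hcosm_ne : Real.cos Lm ≠ 0 := by
      intro h
      have h2 := Real.sin_sq_add_cos_sq Lm
      rw [h, hsLm] at h2
      nlinarith
    have hcosp_ne : Real.cos Lp ≠ 0 := by
      intro h
      have h2 := Real.sin_sq_add_cos_sq Lp
      rw [h, hsLp] at h2
      nlinarith
    have hcosm : 0 < Real.cos Lm := by
      rcases hcosm_ne.lt_or_gt with h | h
      · exfalso
        obtain ⟨ε, hε, hanti'⟩ := sin_strictAntiOn_near' h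
        obtain ⟨ξ, hξ⟩ := (hLm.eventually (eventually_gt_nhds
          (by linarith : Lm - ε < Lm))).exists
        have h1 : Lm ∈ Set.Ioo (Lm - ε) (Lm + ε) := ⟨by linarith, by linarith⟩
        have h2 : g ξ ∈ Set.Ioo (Lm - ε) (Lm + ε) := ⟨hξ, by linarith [hltm ξ]⟩
        have h3 := hanti' h2 h1 (hltm ξ)
        rw [hsLm] at h3
        linarith [hneg ξ]
      · exact h
    have hcosp : Real.cos Lp < 0 := by
      rcases hcosp_ne.lt_or_gt with h | h
      · exact h
      · exfalso
        obtain ⟨ε, hε, hmon⟩ := sin_strictMonoOn_near' h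
        obtain ⟨ξ, hξ⟩ := (hLp.eventually (eventually_lt_nhds
          (by linarith : Lp < Lp + ε))).exists
        have h1 : Lp ∈ Set.Ioo (Lp - ε) (Lp + ε) := ⟨by linarith, by linarith⟩
        have h2 : g ξ ∈ Set.Ioo (Lp - ε) (Lp + ε) := ⟨by linarith [hltp ξ], hξ⟩
        have h3 := hmon h1 h2 (hltp ξ)
        rw [hsLp] at h3
        linarith [hneg ξ]
    exact ⟨Or.inr hanti, Lm, Lp, hLm, hLp, hsLm, hsLp,
      class1' γ Lm hγ0 hγ1 hsLm hcosm, class2' γ Lp hγ0 hγ1 hsLp hcosp⟩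
end

section
/- Let 0 < γ < 1, μ ≥ 0, and let g : ℝ → ℝ be a C² solution of the reduced travelling-wave ODE g'' + μ g' + sin g − γ = 0. Suppose there exist ξ̄ ∈ ℝ and k ∈ ℤ with g(ξ̄) = π − arcsin γ + 2kπ (a local maximum point of U) and g'(ξ̄) < 0. Then g'(ξ) < g'(ξ̄) < 0 for all ξ < ξ̄, and g(ξ) → +∞ and g'(ξ) → −∞ as ξ → −∞. -/
open Real Filter Topology Set

private lemma aux_sqrt_atTop : Tendsto Real.sqrt atTop atTop := by
  rw [tendsto_atTop_atTop]
  intro b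
  refine ⟨b ^ 2, fun a ha => ?_⟩
  calc b ≤ |b| := le_abs_self b
    _ = Real.sqrt (b ^ 2) := (Real.sqrt_sq_eq_abs b).symm
    _ ≤ Real.sqrt a := Real.sqrt_le_sqrt ha

/-- V(p+s) - V(p) = γ(s - sin s) + √(1-γ²)(1 - cos s), where V x = cos x + γ x. -/
private lemma aux_V_incr (γ p : ℝ) (hγ0 : 0 < γ)
    (hs : Real.sin p = γ) (hc : Real.cos p = -Real.sqrt (1 - γ ^ 2)) :
    ∀ s : ℝ, 0 < s → Real.cos p + γ * p < Real.cos (p + s) + γ * (p + s) := by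
  intro s hspos
  have h1 : Real.cos (p + s) = -Real.sqrt (1 - γ ^ 2) * Real.cos s - γ * Real.sin s := by
    rw [Real.cos_add, hs, hc]
  have h2 : Real.sin s < s := Real.sin_lt hspos
  have h3 : Real.cos s ≤ 1 := Real.cos_le_one s
  have h4 : (0:ℝ) ≤ Real.sqrt (1 - γ ^ 2) := Real.sqrt_nonneg _
  nlinarith [mul_nonneg h4 (sub_nonneg.mpr h3)]

private lemma aux_sin_le (γ p : ℝ) (hγ0 : 0 < γ)
    (hs : Real.sin p = γ) (hc : Real.cos p = -Real.sqrt (1 - γ ^ 2)) :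
    ∀ s : ℝ, 0 ≤ s → s ≤ π → Real.sin (p + s) ≤ γ := by
  intro s h0 hπ
  have h1 : Real.sin (p + s) = γ * Real.cos s - Real.sqrt (1 - γ ^ 2) * Real.sin s := by
    rw [Real.sin_add, hs, hc]; ring
  have h2 : Real.sin s ≥ 0 := Real.sin_nonneg_of_nonneg_of_le_pi h0 hπ
  have h3 : Real.cos s ≤ 1 := Real.cos_le_one s
  have h4 : (0:ℝ) ≤ Real.sqrt (1 - γ ^ 2) := Real.sqrt_nonneg _
  nlinarith [mul_nonneg h4 h2]

private lemma aux_sin_lt (γ p : ℝ) (hγ0 : 0 < γ) (hγ1 : γ < 1)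
    (hs : Real.sin p = γ) (hc : Real.cos p = -Real.sqrt (1 - γ ^ 2)) :
    ∀ s : ℝ, 0 < s → s < π → Real.sin (p + s) < γ := by
  intro s h0 hπ
  have h1 : Real.sin (p + s) = γ * Real.cos s - Real.sqrt (1 - γ ^ 2) * Real.sin s := by
    rw [Real.sin_add, hs, hc]; ring
  have h2 : Real.sin s > 0 := Real.sin_pos_of_pos_of_lt_pi h0 hπ
  have h3 : Real.cos s ≤ 1 := Real.cos_le_one s
  have h4 : (0:ℝ) < Real.sqrt (1 - γ ^ 2) := Real.sqrt_pos.mpr (by nlinarith)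
  nlinarith [mul_pos h4 h2]

/-- For a C² solution of the reduced travelling-wave ODE
`g'' + μ g' + sin g - γ = 0` (with `μ ≥ 0`, `0 < γ < 1`) that at some `ξ̄`
sits at a local maximum `π - arcsin γ + 2kπ` of the washboard potential with
`g'(ξ̄) < 0`, one has `g'(ξ) < g'(ξ̄) < 0` for all `ξ < ξ̄`, and `g(ξ) → +∞`,
`g'(ξ) → -∞` as `ξ → -∞`. -/
theorem reducedODE_leftward_at_maximum_blowup
    (μ γ : ℝ) (hμ : 0 ≤ μ) (hγ0 : 0 < γ) (hγ1 : γ < 1)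
    (g : ℝ → ℝ) (hg : ContDiff ℝ 2 g)
    (heq : ∀ ξ : ℝ,
        deriv (deriv g) ξ + μ * deriv g ξ + Real.sin (g ξ) - γ = 0)
    (ξb : ℝ) (k : ℤ) (hval : g ξb = π - Real.arcsin γ + 2 * k * π)
    (hder : deriv g ξb < 0) :
    (∀ ξ : ℝ, ξ < ξb → deriv g ξ < deriv g ξb)
    ∧ Tendsto g atBot atTop
    ∧ Tendsto (deriv g) atBot atBot := by
  -- Basic differentiability facts
  have hg2 : ContDiff ℝ ((1:ℕ) + (1:ℕ)) g := by exact_mod_cast hg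
  obtain ⟨hgdiff, -, hc1⟩ := contDiff_succ_iff_deriv.mp hg2
  have hφ : Differentiable ℝ (deriv g) := hc1.differentiable (by simp)
  have hφc : Continuous (deriv g) := hφ.continuous
  have hgc : Continuous g := hgdiff.continuous
  have hgd : ∀ ξ : ℝ, HasDerivAt g (deriv g ξ) ξ := fun ξ => (hgdiff ξ).hasDerivAt
  have hφd : ∀ ξ : ℝ, HasDerivAt (deriv g)
      (γ - Real.sin (g ξ) - μ * deriv g ξ) ξ := by
    intro ξ
    have h := (hφ ξ).hasDerivAt
    have hkey : deriv (deriv g) ξ = γ - Real.sin (g ξ) - μ * deriv g ξ := by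
      have := heq ξ; linarith
    rwa [hkey] at h
  set c := deriv g ξb with hc_def
  -- trigonometric values at g ξb
  have hrw : g ξb = (π - Real.arcsin γ) + (k : ℝ) * (2 * π) := by rw [hval]; push_cast; ring
  have hsinp : Real.sin (g ξb) = γ := by
    rw [hrw, Real.sin_add_int_mul_two_pi, Real.sin_pi_sub,
      Real.sin_arcsin (by linarith) (by linarith)]
  have hcosp : Real.cos (g ξb) = -Real.sqrt (1 - γ ^ 2) := by
    rw [hrw, Real.cos_add_int_mul_two_pi, Real.cos_pi_sub, Real.cos_arcsin]
  -- Energy function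
  set E : ℝ → ℝ := fun ξ => (deriv g ξ) ^ 2 / 2 - Real.cos (g ξ) - γ * g ξ with hE_def
  have hE : ∀ ξ : ℝ, HasDerivAt E (-μ * (deriv g ξ) ^ 2) ξ := by
    intro ξ
    have h1 : HasDerivAt (fun t => (deriv g t) ^ 2 / 2)
        (deriv g ξ * (γ - Real.sin (g ξ) - μ * deriv g ξ)) ξ := by
      have := ((hφd ξ).pow 2).div_const 2
      exact this.congr_deriv (by simp; ring)
    have h2 : HasDerivAt (fun t => Real.cos (g t)) (-Real.sin (g ξ) * deriv g ξ) ξ :=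
      (Real.hasDerivAt_cos (g ξ)).comp ξ (hgd ξ)
    have h3 : HasDerivAt (fun t => γ * g t) (γ * deriv g ξ) ξ := (hgd ξ).const_mul γ
    have h4 := (h1.sub h2).sub h3
    exact h4.congr_deriv (by ring)
  have hEanti : Antitone E := by
    apply antitone_of_deriv_nonpos (fun ξ => (hE ξ).differentiableAt)
    intro ξ
    rw [(hE ξ).deriv]
    nlinarith [sq_nonneg (deriv g ξ)]
  -- local neighborhood to the left of ξb
  have hnhd : ∀ᶠ ξ in 𝓝 ξb, deriv g ξ < 0 ∧ |g ξ - g ξb| < π := by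
    have e1 : ∀ᶠ ξ in 𝓝 ξb, deriv g ξ < 0 :=
      (hφc.continuousAt).eventually_lt continuousAt_const hder
    have e2 : ∀ᶠ ξ in 𝓝 ξb, |g ξ - g ξb| < π := by
      have : ContinuousAt (fun ξ => |g ξ - g ξb|) ξb := ((hgc.sub continuous_const).abs).continuousAt
      have h0 : |g ξb - g ξb| < π := by simpa using Real.pi_pos
      exact this.eventually_lt continuousAt_const h0
    exact e1.and e2
  obtain ⟨δ, hδpos, hδ⟩ := Metric.eventually_nhds_iff.mp hnhd
  set δ' := δ / 2 with hδ'_def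
  have hδ'pos : 0 < δ' := by positivity
  have hI : ∀ ξ ∈ Icc (ξb - δ') ξb, deriv g ξ < 0 ∧ |g ξ - g ξb| < π := by
    intro ξ hξ
    apply hδ
    rw [Real.dist_eq, abs_lt]
    constructor <;> [linarith [hξ.1]; linarith [hξ.2]]
  have hξbI : ξb ∈ Icc (ξb - δ') ξb := ⟨by linarith, le_refl _⟩
  have hanti : StrictAntiOn g (Icc (ξb - δ') ξb) := by
    apply strictAntiOn_of_deriv_neg (convex_Icc _ _) hgc.continuousOn
    intro x hx
    rw [interior_Icc] at hx
    exact (hI x ⟨hx.1.le, hx.2.le⟩).1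
  have hgpos : ∀ ξ ∈ Icc (ξb - δ') ξb, ξ < ξb → g ξb < g ξ :=
    fun ξ hξ hlt => hanti hξ hξbI hlt
  have hmono : MonotoneOn (deriv g) (Icc (ξb - δ') ξb) := by
    apply monotoneOn_of_deriv_nonneg (convex_Icc _ _) hφc.continuousOn
      (fun x _ => (hφ x).differentiableWithinAt)
    intro x hx
    rw [interior_Icc] at hx
    have hxI : x ∈ Icc (ξb - δ') ξb := ⟨hx.1.le, hx.2.le⟩
    rw [(hφd x).deriv]
    have h1 : g ξb < g x := hgpos x hxI hx.2
    have h2 : |g x - g ξb| < π := (hI x hxI).2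
    have h3 : Real.sin (g x) ≤ γ := by
      have : g x = g ξb + (g x - g ξb) := by ring
      rw [this]
      exact aux_sin_le γ (g ξb) hγ0 hsinp hcosp _ (by linarith) (by cases' abs_lt.mp h2 with _ h; linarith)
    have h4 : deriv g x < 0 := (hI x hxI).1
    nlinarith
  -- local strict inequality near ξb
  have hlocal : ∀ ξ : ℝ, ξb - δ' ≤ ξ → ξ < ξb → deriv g ξ < c := by
    intro ξ h1 h2
    have hξI : ξ ∈ Icc (ξb - δ') ξb := ⟨h1, h2.le⟩
    have hle : deriv g ξ ≤ c := hmono hξI hξbI h2.le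
    rcases lt_or_eq_of_le hle with h | h
    · exact h
    -- deriv g ξ = c : derive a contradiction
    exfalso
    have hconst : ∀ t ∈ Icc ξ ξb, deriv g t = c := by
      intro t ht
      have htI : t ∈ Icc (ξb - δ') ξb := ⟨le_trans h1 ht.1, ht.2⟩
      have ha := hmono hξI htI ht.1
      have hb := hmono htI hξbI ht.2
      rw [h] at ha
      linarith
    have hder0 : ∀ t ∈ Ioo ξ ξb, deriv (deriv g) t = 0 := by
      intro t ht
      have hevq : deriv g =ᶠ[𝓝 t] fun _ => c := by
        filter_upwards [isOpen_Ioo.mem_nhds ht] with s hs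
        exact hconst s ⟨hs.1.le, hs.2.le⟩
      rw [hevq.deriv_eq, deriv_const]
    have hsin_eq : ∀ t ∈ Ioo ξ ξb, Real.sin (g t) = γ - μ * c := by
      intro t ht
      have h5 := heq t
      rw [hder0 t ht, hconst t ⟨ht.1.le, ht.2.le⟩] at h5
      linarith
    -- take closure to evaluate at ξb
    have hclos : Real.sin (g ξb) = γ - μ * c := by
      have heqon : EqOn (fun t => Real.sin (g t)) (fun _ => γ - μ * c) (Ioo ξ ξb) :=
        fun t ht => hsin_eq t ht
      have := heqon.closure (Real.continuous_sin.comp hgc) continuous_const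
      have hmem : ξb ∈ closure (Ioo ξ ξb) := by
        rw [closure_Ioo (ne_of_lt h2)]
        exact ⟨h2.le, le_refl _⟩
      exact this hmem
    have hμc : μ * c = 0 := by rw [hsinp] at hclos; linarith
    have hμ0 : μ = 0 := by
      rcases mul_eq_zero.mp hμc with h' | h'
      · exact h'
      · exfalso; rw [hc_def] at *; linarith
    set t0 := (ξ + ξb) / 2 with ht0_def
    have ht0 : t0 ∈ Ioo ξ ξb := ⟨by rw [ht0_def]; linarith, by rw [ht0_def]; linarith⟩
    have hsin0 : Real.sin (g t0) = γ := by
      have := hsin_eq t0 ht0; rw [hμ0] at this; linarith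
    have ht0I : t0 ∈ Icc (ξb - δ') ξb := ⟨le_trans h1 ht0.1.le, ht0.2.le⟩
    have hgt0 : g ξb < g t0 := hgpos t0 ht0I ht0.2
    have habs : |g t0 - g ξb| < π := (hI t0 ht0I).2
    have hlt : Real.sin (g t0) < γ := by
      have : g t0 = g ξb + (g t0 - g ξb) := by ring
      rw [this]
      exact aux_sin_lt γ (g ξb) hγ0 hγ1 hsinp hcosp _ (by linarith)
        (by cases' abs_lt.mp habs with _ h'; linarith)
    linarith
  -- Part 1: global strict inequality
  have part1 : ∀ ξ : ℝ, ξ < ξb → deriv g ξ < c := by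
    by_contra hcon
    push_neg at hcon
    obtain ⟨ξ0, hξ0lt, hξ0ge⟩ := hcon
    have hξ0' : ξ0 < ξb - δ' := by
      by_contra h'
      push_neg at h'
      exact absurd (hlocal ξ0 h' hξ0lt) (not_lt.mpr hξ0ge)
    set S := Icc ξ0 (ξb - δ') ∩ deriv g ⁻¹' Ici c with hS_def
    have hSclosed : IsClosed S := isClosed_Icc.inter (isClosed_Ici.preimage hφc)
    have hξ0S : ξ0 ∈ S := ⟨⟨le_refl _, hξ0'.le⟩, hξ0ge⟩
    have hSbdd : BddAbove S := ⟨ξb - δ', fun t ht => ht.1.2⟩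
    set ξ1 := sSup S with hξ1_def
    have hξ1S : ξ1 ∈ S := hSclosed.csSup_mem ⟨ξ0, hξ0S⟩ hSbdd
    have hξ1lt : ξ1 < ξb := lt_of_le_of_lt hξ1S.1.2 (by linarith)
    have hξ0le : ξ0 ≤ ξ1 := le_csSup hSbdd hξ0S
    have hA : ∀ t ∈ Ioo ξ1 ξb, deriv g t < c := by
      intro t ht
      by_cases hcase : ξb - δ' ≤ t
      · exact hlocal t hcase ht.2
      · push_neg at hcase
        by_contra hge
        push_neg at hge
        have htS : t ∈ S := ⟨⟨le_trans hξ0le ht.1.le, hcase.le⟩, hge⟩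
        have : t ≤ ξ1 := le_csSup hSbdd htS
        linarith [ht.1]
    have hB : deriv g ξ1 ≤ c := by
      have ht : Tendsto (deriv g) (𝓝[>] ξ1) (𝓝 (deriv g ξ1)) :=
        (hφc.continuousAt).continuousWithinAt.tendsto
      have hev : ∀ᶠ t in 𝓝[>] ξ1, deriv g t ≤ c := by
        have hmem : Ioo ξ1 ξb ∈ 𝓝[>] ξ1 := Ioo_mem_nhdsGT_of_mem ⟨le_refl _, hξ1lt⟩
        filter_upwards [hmem] with t ht' using (hA t ht').le
      exact le_of_tendsto ht hev
    have hφξ1 : deriv g ξ1 = c := le_antisymm hB hξ1S.2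
    have hganti1 : StrictAntiOn g (Icc ξ1 ξb) := by
      apply strictAntiOn_of_deriv_neg (convex_Icc _ _) hgc.continuousOn
      intro x hx
      rw [interior_Icc] at hx
      have := hA x hx
      rw [hc_def] at *
      linarith
    have hgx : g ξb < g ξ1 := hganti1 ⟨le_refl _, hξ1lt.le⟩ ⟨hξ1lt.le, le_refl _⟩ hξ1lt
    have hEineq : E ξb ≤ E ξ1 := hEanti hξ1lt.le
    rw [hE_def] at hEineq
    simp only [hφξ1] at hEineq
    have hkey := aux_V_incr γ (g ξb) hγ0 hsinp hcosp (g ξ1 - g ξb) (by linarith)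
    have : g ξb + (g ξ1 - g ξb) = g ξ1 := by ring
    rw [this] at hkey
    nlinarith
  -- Part 2: g tends to +∞ as ξ → -∞
  have hcneg : c < 0 := hder
  have hlin : StrictAntiOn (fun ξ => g ξ - c * ξ) (Iic ξb) := by
    apply strictAntiOn_of_deriv_neg (convex_Iic _) (hgc.sub (continuous_const.mul continuous_id')).continuousOn
    intro x hx
    rw [interior_Iic] at hx
    have hd : HasDerivAt (fun ξ => g ξ - c * ξ) (deriv g x - c) x := by
      have h1 : HasDerivAt (fun ξ : ℝ => c * ξ) c x := by
        simpa using (hasDerivAt_id x).const_mul c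
      exact (hgd x).sub h1
    rw [show deriv (g - (fun x => deriv g ξb) * fun x => x) x = deriv g x - c from hd.deriv]
    linarith [part1 x hx]
  have hgrow : ∀ ξ : ℝ, ξ < ξb → c * ξ + (g ξb - c * ξb) ≤ g ξ := by
    intro ξ hξ
    have := hlin (mem_Iic.mpr hξ.le) (mem_Iic.mpr (le_refl _)) hξ
    simp only at this
    linarith
  have hlintend : Tendsto (fun ξ : ℝ => c * ξ + (g ξb - c * ξb)) atBot atTop := by
    apply Filter.tendsto_atTop_add_const_right
    have h1 : Tendsto (fun ξ : ℝ => (-c) * ξ) atBot atBot :=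
      (tendsto_id (α := ℝ)).const_mul_atBot (by linarith)
    have h2 : Tendsto (fun ξ : ℝ => -((-c) * ξ)) atBot atTop := tendsto_neg_atBot_atTop.comp h1
    convert h2 using 2 with ξ
    ring
  have htg : Tendsto g atBot atTop := by
    apply tendsto_atTop_mono' atBot _ hlintend
    filter_upwards [eventually_lt_atBot ξb] with ξ hξ using hgrow ξ hξ
  -- Part 3: deriv g tends to -∞
  have htφ : Tendsto (deriv g) atBot atBot := by
    set K := E ξb with hK_def
    have hbnd : ∀ᶠ ξ in atBot, deriv g ξ ≤ -Real.sqrt (2 * γ * g ξ + 2 * (K - 1)) := by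
      have hev1 : ∀ᶠ ξ in atBot, ξ < ξb := eventually_lt_atBot ξb
      have hev2 : ∀ᶠ ξ in atBot, 1 - K ≤ γ * g ξ := by
        have : Tendsto (fun ξ => γ * g ξ) atBot atTop := htg.const_mul_atTop hγ0
        exact this.eventually_ge_atTop (1 - K)
      filter_upwards [hev1, hev2] with ξ hξ hKξ
      have hEineq : K ≤ E ξ := hEanti hξ.le
      rw [hE_def] at hEineq
      simp only at hEineq
      have hcos : -1 ≤ Real.cos (g ξ) := Real.neg_one_le_cos (g ξ)
      have hsq : 2 * γ * g ξ + 2 * (K - 1) ≤ (deriv g ξ) ^ 2 := by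
        clear_value K E c
        linarith
      have hφneg : deriv g ξ < 0 := lt_trans (part1 ξ hξ) hcneg
      have h5 : Real.sqrt (2 * γ * g ξ + 2 * (K - 1)) ≤ -deriv g ξ := by
        calc Real.sqrt (2 * γ * g ξ + 2 * (K - 1)) ≤ Real.sqrt ((deriv g ξ) ^ 2) :=
              Real.sqrt_le_sqrt hsq
          _ = |deriv g ξ| := Real.sqrt_sq_eq_abs _
          _ = -deriv g ξ := abs_of_neg hφneg
      linarith
    have hsqrt : Tendsto (fun ξ => -Real.sqrt (2 * γ * g ξ + 2 * (K - 1))) atBot atBot := by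
      have h1 : Tendsto (fun ξ => 2 * γ * g ξ + 2 * (K - 1)) atBot atTop := by
        apply Filter.tendsto_atTop_add_const_right
        exact htg.const_mul_atTop (by linarith)
      have h2 : Tendsto (fun ξ => Real.sqrt (2 * γ * g ξ + 2 * (K - 1))) atBot atTop :=
        aux_sqrt_atTop.comp h1
      exact tendsto_neg_atTop_atBot.comp h2
    exact tendsto_atBot_mono' atBot hbnd hsqrt
  exact ⟨part1, htg, htφ⟩
end

section
/- Let μ > 0, 0 ≤ γ < 1, and let g : ℝ → ℝ be a bounded C² solution of the reduced travelling-wave ODE g'' + μ g' + sin g − γ = 0. Then g'(ξ) → 0 as ξ → +∞ and g'(ξ) → 0 as ξ → −∞; moreover ∫_{−∞}^{+∞} g'(ξ)² dξ < ∞. -/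
open Real Filter Topology MeasureTheory

/-- Barbălat-type lemma: if `v` is Lipschitz, `E` is an "energy" with
`μ ∫ v² = E a - E b` on intervals, and the energy increments vanish along the
filter `l`, then `v → 0` along `l`. -/
lemma aux_tendsto_zero (v E : ℝ → ℝ) (μ L : ℝ) (hμ : 0 < μ) (hL : 0 < L)
    (hv : Continuous v)
    (hlip : ∀ s t : ℝ, |v s - v t| ≤ L * |s - t|)
    (hFTC : ∀ a b : ℝ, a ≤ b → μ * ∫ x in a..b, (v x) ^ 2 = E a - E b)
    (l : Filter ℝ) [l.NeBot]
    (hE : ∀ δ : ℝ, 0 < δ → Tendsto (fun ξ => E ξ - E (ξ + δ)) l (𝓝 0)) :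
    Tendsto v l (𝓝 0) := by
  rw [Metric.tendsto_nhds]
  by_contra hcon
  push_neg at hcon
  obtain ⟨ε, hε, hcon⟩ := hcon
  have hfreq : ∃ᶠ ξ in l, ε ≤ |v ξ| := by
    refine hcon.mono fun ξ h => ?_
    rw [Real.dist_eq, sub_zero] at h
    linarith
  set δ : ℝ := ε / (2 * L) with hδdef
  have hδ : 0 < δ := div_pos hε (by positivity)
  have hpos : (0 : ℝ) < μ * (δ * (ε ^ 2 / 4)) := by positivity
  have hev : ∀ᶠ ξ in l, |E ξ - E (ξ + δ)| < μ * (δ * (ε ^ 2 / 4)) := by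
    have := Metric.tendsto_nhds.mp (hE δ hδ) _ hpos
    refine this.mono fun ξ h => ?_
    rwa [Real.dist_eq, sub_zero] at h
  obtain ⟨ξ, hξ1, hξ2⟩ := (hfreq.and_eventually hev).exists
  have hLδ : L * δ = ε / 2 := by
    rw [hδdef]; field_simp
  have hsub : ∀ t ∈ Set.Icc ξ (ξ + δ), ε / 2 ≤ |v t| := by
    intro t ht
    have h1 : |v ξ - v t| ≤ L * |ξ - t| := hlip ξ t
    have h2 : |ξ - t| ≤ δ := by
      rw [abs_sub_comm, abs_of_nonneg (by linarith [ht.1])]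
      linarith [ht.2]
    have h3 : L * |ξ - t| ≤ ε / 2 := by
      rw [← hLδ]; exact mul_le_mul_of_nonneg_left h2 hL.le
    have h4 := abs_sub_abs_le_abs_sub (v ξ) (v t)
    linarith
  have hint : δ * (ε ^ 2 / 4) ≤ ∫ x in ξ..(ξ + δ), (v x) ^ 2 := by
    have hmono : ∫ x in ξ..(ξ + δ), (ε ^ 2 / 4) ≤ ∫ x in ξ..(ξ + δ), (v x) ^ 2 := by
      apply intervalIntegral.integral_mono_on (by linarith) (intervalIntegrable_const)
        ((hv.pow 2).intervalIntegrable _ _)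
      intro t ht
      have h := hsub t ht
      have : (ε / 2) ^ 2 ≤ |v t| ^ 2 := by
        apply pow_le_pow_left₀ (by linarith) h
      rw [sq_abs] at this
      simp only [Pi.pow_apply]
      nlinarith
    rw [intervalIntegral.integral_const, smul_eq_mul] at hmono
    have : ξ + δ - ξ = δ := by ring
    rw [this] at hmono
    exact hmono
  have hFT := hFTC ξ (ξ + δ) (by linarith)
  have hle : μ * (δ * (ε ^ 2 / 4)) ≤ μ * ∫ x in ξ..(ξ + δ), (v x) ^ 2 :=
    mul_le_mul_of_nonneg_left hint hμ.le
  have := le_abs_self (E ξ - E (ξ + δ))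
  linarith

/-- For `μ > 0`, `0 ≤ γ < 1`, a bounded C² solution of the reduced
travelling-wave ODE `g'' + μ g' + sin g - γ = 0` has `g'(ξ) → 0` as
`ξ → ±∞`, and `∫_{-∞}^{+∞} g'(ξ)² dξ < ∞`. -/
theorem reducedODE_bounded_solution_derivative_vanishes
    (μ γ : ℝ) (hμ : 0 < μ) (hγ0 : 0 ≤ γ) (hγ1 : γ < 1)
    (g : ℝ → ℝ) (hg : ContDiff ℝ 2 g)
    (hbound : ∃ M : ℝ, ∀ ξ : ℝ, |g ξ| ≤ M)
    (heq : ∀ ξ : ℝ,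
        deriv (deriv g) ξ + μ * deriv g ξ + Real.sin (g ξ) - γ = 0) :
    Tendsto (deriv g) atTop (𝓝 0)
    ∧ Tendsto (deriv g) atBot (𝓝 0)
    ∧ Integrable (fun ξ : ℝ => (deriv g ξ) ^ 2) := by
  obtain ⟨M, hM⟩ := hbound
  have hM0 : 0 ≤ M := le_trans (abs_nonneg _) (hM 0)
  set v := deriv g with hv
  have hgd : Differentiable ℝ g := hg.differentiable (by norm_num)
  have hvc1 : ContDiff ℝ 1 v := by
    have h2 : ContDiff ℝ ((1 : ℕ) + 1) g := by exact_mod_cast hg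
    exact (contDiff_succ_iff_deriv.mp h2).2.2
  have hvd : Differentiable ℝ v := hvc1.differentiable one_ne_zero
  have hvcont : Continuous v := hvd.continuous
  have ODE : ∀ ξ, deriv v ξ = γ - Real.sin (g ξ) - μ * v ξ := fun ξ => by
    have := heq ξ; linarith
  set E : ℝ → ℝ := fun ξ => (v ξ) ^ 2 / 2 - Real.cos (g ξ) - γ * g ξ with hE
  have hgD : ∀ ξ : ℝ, HasDerivAt g (v ξ) ξ := fun ξ => (hgd ξ).hasDerivAt
  have hEderiv : ∀ ξ, HasDerivAt E (-(μ * (v ξ) ^ 2)) ξ := by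
    intro ξ
    have h2 : HasDerivAt v (deriv v ξ) ξ := (hvd ξ).hasDerivAt
    have h3 : HasDerivAt (fun x => (v x) ^ 2 / 2) ((2 : ℕ) * v ξ ^ 1 * deriv v ξ / 2) ξ :=
      (h2.pow 2).div_const 2
    have h4 : HasDerivAt (fun x => Real.cos (g x)) (-Real.sin (g ξ) * v ξ) ξ :=
      (Real.hasDerivAt_cos (g ξ)).comp ξ (hgD ξ)
    have h5 : HasDerivAt (fun x => γ * g x) (γ * v ξ) ξ := (hgD ξ).const_mul γ
    have h6 := (h3.sub h4).sub h5
    refine HasDerivAt.congr_deriv h6 ?_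
    rw [ODE ξ]; push_cast; ring
  have hEd : Differentiable ℝ E := fun ξ => (hEderiv ξ).differentiableAt
  have hEanti : Antitone E := by
    apply antitone_of_deriv_nonpos hEd
    intro ξ
    rw [(hEderiv ξ).deriv]
    have : 0 ≤ μ * (v ξ) ^ 2 := by positivity
    linarith
  have hFTC : ∀ a b : ℝ, a ≤ b → μ * ∫ x in a..b, (v x) ^ 2 = E a - E b := by
    intro a b _
    have hi : IntervalIntegrable (fun x => -(μ * (v x) ^ 2)) volume a b :=
      ((continuous_const.mul (hvcont.pow 2)).neg).intervalIntegrable a b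
    have h := intervalIntegral.integral_eq_sub_of_hasDerivAt (fun x _ => hEderiv x) hi
    rw [intervalIntegral.integral_neg, intervalIntegral.integral_const_mul] at h
    linarith
  -- bound on v
  have hvbound : ∀ ξ, (v ξ) ^ 2 ≤ 4 * M ^ 2 + 4 + 4 * γ * M := by
    intro ξ
    obtain ⟨c, hc, hc2⟩ := exists_hasDerivAt_eq_slope g v (by linarith : ξ - 1 < ξ)
      (hgd.continuous.continuousOn) (fun x _ => hgD x)
    have hvc2 : |v c| ≤ 2 * M := by
      rw [hc2]
      have : ξ - (ξ - 1) = 1 := by ring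
      rw [this, div_one]
      calc |g ξ - g (ξ - 1)| ≤ |g ξ| + |g (ξ - 1)| := abs_sub _ _
        _ ≤ 2 * M := by linarith [hM ξ, hM (ξ - 1)]
    have h1 : v ξ ^ 2 / 2 - Real.cos (g ξ) - γ * g ξ
        ≤ v c ^ 2 / 2 - Real.cos (g c) - γ * g c := hEanti hc.2.le
    have hvc3 : (v c) ^ 2 ≤ 4 * M ^ 2 := by nlinarith [sq_abs (v c), abs_nonneg (v c)]
    have hgξ := abs_le.mp (hM ξ)
    have hgc := abs_le.mp (hM c)
    have hcos1 := Real.cos_le_one (g ξ)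
    have hcos2 := Real.neg_one_le_cos (g ξ)
    have hcos3 := Real.cos_le_one (g c)
    have hcos4 := Real.neg_one_le_cos (g c)
    nlinarith [mul_le_mul_of_nonneg_left hgξ.2 hγ0, mul_le_mul_of_nonneg_left hgξ.1 hγ0,
      mul_le_mul_of_nonneg_left hgc.2 hγ0, mul_le_mul_of_nonneg_left hgc.1 hγ0]
  set C : ℝ := 4 * M ^ 2 + 4 + 4 * γ * M with hCdef
  have hC0 : 0 ≤ C := by positivity
  have hK : ∀ ξ, |v ξ| ≤ Real.sqrt C := fun ξ => Real.abs_le_sqrt (hvbound ξ)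
  set L : ℝ := 1 + γ + μ * Real.sqrt C with hLdef
  have hsC : 0 ≤ Real.sqrt C := Real.sqrt_nonneg _
  have hL : 0 < L := by positivity
  have hlip : ∀ s t : ℝ, |v s - v t| ≤ L * |s - t| := by
    intro s t
    have hb : ∀ x ∈ (Set.univ : Set ℝ), ‖deriv v x‖ ≤ L := by
      intro x _
      rw [Real.norm_eq_abs, ODE x]
      have hs1 := Real.sin_le_one (g x)
      have hs2 := Real.neg_one_le_sin (g x)
      have hvx := abs_le.mp (hK x)
      rw [abs_le]
      constructor
      · nlinarith [mul_le_mul_of_nonneg_left hvx.2 hμ.le]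
      · nlinarith [mul_le_mul_of_nonneg_left hvx.1 hμ.le]
    have := convex_univ.norm_image_sub_le_of_norm_deriv_le
      (fun x _ => (hvd x)) hb (Set.mem_univ s) (Set.mem_univ t)
    rw [Real.norm_eq_abs, Real.norm_eq_abs] at this
    calc |v s - v t| = |v t - v s| := abs_sub_comm _ _
      _ ≤ L * |t - s| := this
      _ = L * |s - t| := by rw [abs_sub_comm]
  -- E is bounded
  have hEbelow : ∀ ξ, -(1 + γ * M) ≤ E ξ := by
    intro ξ
    have hgξ := abs_le.mp (hM ξ)
    have hcos := Real.cos_le_one (g ξ)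
    have hsq : 0 ≤ (v ξ) ^ 2 / 2 := by positivity
    have : γ * g ξ ≤ γ * M := mul_le_mul_of_nonneg_left hgξ.2 hγ0
    simp only [hE]
    linarith
  have hEabove : ∀ ξ, E ξ ≤ C / 2 + 1 + γ * M := by
    intro ξ
    have hgξ := abs_le.mp (hM ξ)
    have hcos := Real.neg_one_le_cos (g ξ)
    have hsq := hvbound ξ
    have : -(γ * M) ≤ γ * g ξ := by nlinarith [mul_le_mul_of_nonneg_left hgξ.1 hγ0]
    simp only [hE]
    rw [hCdef]
    linarith
  have htop : Tendsto E atTop (𝓝 (⨅ ξ, E ξ)) :=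
    tendsto_atTop_ciInf hEanti ⟨-(1 + γ * M), by rintro x ⟨ξ, rfl⟩; exact hEbelow ξ⟩
  have hbot : Tendsto E atBot (𝓝 (⨆ ξ, E ξ)) :=
    tendsto_atBot_ciSup hEanti ⟨C / 2 + 1 + γ * M, by rintro x ⟨ξ, rfl⟩; exact hEabove ξ⟩
  have hEtopd : ∀ δ : ℝ, 0 < δ → Tendsto (fun ξ => E ξ - E (ξ + δ)) atTop (𝓝 0) := by
    intro δ _
    have h2 : Tendsto (fun ξ : ℝ => E (ξ + δ)) atTop (𝓝 (⨅ ξ, E ξ)) :=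
      htop.comp (tendsto_atTop_add_const_right atTop δ tendsto_id)
    simpa using htop.sub h2
  have hEbotd : ∀ δ : ℝ, 0 < δ → Tendsto (fun ξ => E ξ - E (ξ + δ)) atBot (𝓝 0) := by
    intro δ _
    have h2 : Tendsto (fun ξ : ℝ => E (ξ + δ)) atBot (𝓝 (⨆ ξ, E ξ)) :=
      hbot.comp (tendsto_atBot_add_const_right atBot δ tendsto_id)
    simpa using hbot.sub h2
  refine ⟨aux_tendsto_zero v E μ L hμ hL hvcont hlip hFTC atTop hEtopd,
    aux_tendsto_zero v E μ L hμ hL hvcont hlip hFTC atBot hEbotd, ?_⟩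
  -- Integrability
  have hIoi : IntegrableOn (fun ξ => μ * (v ξ) ^ 2) (Set.Ioi 0) := by
    apply integrableOn_Ioi_deriv_of_nonneg (g := fun ξ => -E ξ)
      (l := -(⨅ ξ, E ξ))
    · exact (hEd.continuous.neg).continuousWithinAt
    · intro x _; exact (hEderiv x).neg.congr_deriv (by ring)
    · intro x _; positivity
    · exact htop.neg
  have hIoi' : IntegrableOn (fun ξ => (v ξ) ^ 2) (Set.Ioi 0) := by
    have h := hIoi.const_mul μ⁻¹
    have he : (fun ξ => μ⁻¹ * (μ * (v ξ) ^ 2)) = fun ξ => (v ξ) ^ 2 := by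
      funext ξ; field_simp
    rwa [he] at h
  have hFd : ∀ x : ℝ, HasDerivAt (fun ξ => E (-ξ)) (μ * (v (-x)) ^ 2) x := by
    intro x
    have h := (hEderiv (-x)).comp x (hasDerivAt_neg x)
    exact h.congr_deriv (by ring)
  have hIoi2 : IntegrableOn (fun ξ => μ * (v (-ξ)) ^ 2) (Set.Ioi 0) := by
    apply integrableOn_Ioi_deriv_of_nonneg (g := fun ξ => E (-ξ)) (l := ⨆ ξ, E ξ)
    · exact (hEd.continuous.comp continuous_neg).continuousWithinAt
    · intro x _; exact hFd x
    · intro x _; positivity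
    · exact hbot.comp tendsto_neg_atTop_atBot
  have hIoi2' : IntegrableOn (fun ξ => (v (-ξ)) ^ 2) (Set.Ioi 0) := by
    have h := hIoi2.const_mul μ⁻¹
    have he : (fun ξ => μ⁻¹ * (μ * (v (-ξ)) ^ 2)) = fun ξ => (v (-ξ)) ^ 2 := by
      funext ξ; field_simp
    rwa [he] at h
  have hIio : IntegrableOn (fun ξ => (v ξ) ^ 2) (Set.Iio 0) := by
    have hiff := MeasurePreserving.integrableOn_comp_preimage
      (Measure.measurePreserving_neg (volume : Measure ℝ))
      (Homeomorph.neg ℝ).measurableEmbedding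
      (f := fun ξ => (v ξ) ^ 2) (s := Set.Iio (0 : ℝ))
    have hpre : (Neg.neg : ℝ → ℝ) ⁻¹' Set.Iio 0 = Set.Ioi 0 := by
      ext x; simp
    rw [hpre] at hiff
    exact hiff.mp hIoi2'
  have hunion : IntegrableOn (fun ξ => (v ξ) ^ 2) (Set.Iio 0 ∪ Set.Ici 0) := by
    refine hIio.union ?_
    rw [integrableOn_Ici_iff_integrableOn_Ioi]
    exact hIoi'
  rwa [Set.Iio_union_Ici, integrableOn_univ] at hunion
end

section
/- Let μ ≥ 0, 0 < γ < 1, and let g : ℝ → ℝ be a C² solution of the reduced travelling-wave ODE g'' + μ g' + sin g − γ = 0. Suppose there exist ξ_k ∈ ℝ and k ∈ ℤ with g(ξ_k) = π − arcsin γ + 2kπ, and that at every 'time' ξ ≤ ξ_k at which g(ξ) equals some local maximum point π − arcsin γ + 2lπ (l ∈ ℤ) of the potential U one has g'(ξ) > 0. Then g'(ξ) > 0 for all ξ ≤ ξ_k. -/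
open Real Set

private lemma escape_lemma {f : ℝ → ℝ} (hf : Differentiable ℝ f) {A c B : ℝ} (hc : 0 < c)
    (hd : ∀ ξ ≤ A, deriv f ξ ≤ -c) (hB : ∀ ξ ≤ A, f ξ < B) : False := by
  have hder : ∀ x, deriv (fun x => f x + c * x) x = deriv f x + c := by
    intro x
    have := ((hf x).hasDerivAt.add ((hasDerivAt_id x).const_mul c)).deriv
    simp at this; exact this
  have hmono : AntitoneOn (fun x => f x + c * x) (Iic A) := by
    apply antitoneOn_of_deriv_nonpos (convex_Iic A)
    · exact (hf.continuous.add (continuous_const.mul continuous_id)).continuousOn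
    · exact (hf.add (differentiable_id.const_mul c)).differentiableOn
    · intro x hx
      rw [interior_Iic] at hx
      rw [hder x]
      linarith [hd x hx.le]
  have hfA : f A < B := hB A le_rfl
  set ξ : ℝ := A - (B - f A) / c - 1 with hξ
  have hξA : ξ ≤ A := by
    have : 0 < (B - f A) / c := div_pos (by linarith) hc
    rw [hξ]; linarith
  have h1 : f A + c * A ≤ f ξ + c * ξ := hmono hξA (le_refl A : A ∈ Iic A) hξA
  have h2 : c * (A - ξ) = (B - f A) + c := by
    rw [hξ]; field_simp; ring
  have : B + c ≤ f ξ := by nlinarith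
  exact absurd (hB ξ hξA) (by linarith)

private lemma sin_lt_gamma {γ : ℝ} (hγ0 : 0 < γ) (hγ1 : γ < 1) {y : ℝ}
    (h1 : -π - arcsin γ < y) (h2 : y < arcsin γ) : Real.sin y < γ := by
  have hπ := Real.pi_pos
  have ha0 : 0 < arcsin γ := Real.arcsin_pos.mpr hγ0
  have ha2 : arcsin γ < π / 2 := Real.arcsin_lt_pi_div_two.mpr hγ1
  have hsa : Real.sin (arcsin γ) = γ := Real.sin_arcsin (by linarith) hγ1.le
  rcases le_or_gt y (-(π/2)) with hy | hy
  · -- y ∈ (-π - a, -π/2]; sin y = -sin (π + y)?  use z = y + π ∈ (-a, π/2]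
    have hz1 : -(arcsin γ) < y + π := by linarith
    have hz2 : y + π ≤ π / 2 := by linarith
    have hmono := Real.strictMonoOn_sin (by constructor <;> [linarith; linarith] :
        -(arcsin γ) ∈ Icc (-(π/2)) (π/2))
      (by constructor <;> [linarith; linarith] : y + π ∈ Icc (-(π/2)) (π/2)) hz1
    rw [Real.sin_neg, hsa] at hmono
    have hsy : Real.sin y = -Real.sin (y + π) := by
      rw [Real.sin_add_pi, neg_neg]
    linarith
  · have := Real.strictMonoOn_sin
      (by constructor <;> [linarith; linarith] : y ∈ Icc (-(π/2)) (π/2))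
      (by constructor <;> [linarith; linarith] : arcsin γ ∈ Icc (-(π/2)) (π/2)) h2
    rwa [hsa] at this

private lemma gamma_le_sin {γ : ℝ} (hγ0 : 0 < γ) (hγ1 : γ < 1) {y : ℝ}
    (h1 : arcsin γ ≤ y) (h2 : y ≤ π - arcsin γ) : γ ≤ Real.sin y := by
  have hπ := Real.pi_pos
  have ha0 : 0 < arcsin γ := Real.arcsin_pos.mpr hγ0
  have ha2 : arcsin γ < π / 2 := Real.arcsin_lt_pi_div_two.mpr hγ1
  have hsa : Real.sin (arcsin γ) = γ := Real.sin_arcsin (by linarith) hγ1.le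
  rcases le_or_gt y (π/2) with hy | hy
  · have := Real.strictMonoOn_sin.monotoneOn
      (by constructor <;> linarith : arcsin γ ∈ Icc (-(π/2)) (π/2))
      (by constructor <;> linarith : y ∈ Icc (-(π/2)) (π/2)) h1
    rwa [hsa] at this
  · rw [← Real.sin_pi_sub]
    have := Real.strictMonoOn_sin.monotoneOn
      (by constructor <;> linarith : arcsin γ ∈ Icc (-(π/2)) (π/2))
      (by constructor <;> linarith : π - y ∈ Icc (-(π/2)) (π/2)) (by linarith)
    rwa [hsa] at this

private noncomputable def Uw (γ : ℝ) : ℝ → ℝ := fun x => -(Real.cos x + γ * x)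

private lemma hasDerivAt_Uw (γ x : ℝ) : HasDerivAt (Uw γ) (Real.sin x - γ) x := by
  have h := ((Real.hasDerivAt_cos x).add ((hasDerivAt_id x).const_mul γ)).neg
  exact h.congr_deriv (by ring)

private lemma continuous_Uw (γ : ℝ) : Continuous (Uw γ) :=
  (continuous_cos.add (continuous_const.mul continuous_id)).neg

private lemma sin_lt_gamma_shift {γ : ℝ} (hγ0 : 0 < γ) (hγ1 : γ < 1) (l : ℤ) {x : ℝ}
    (h1 : π - arcsin γ + 2*((l:ℝ)-1)*π < x) (h2 : x < arcsin γ + 2*(l:ℝ)*π) :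
    Real.sin x < γ := by
  have hπ := Real.pi_pos
  rw [← Real.sin_sub_int_mul_two_pi x l]
  exact sin_lt_gamma hγ0 hγ1 (by push_cast; linarith) (by push_cast; linarith)

private lemma gamma_le_sin_shift {γ : ℝ} (hγ0 : 0 < γ) (hγ1 : γ < 1) (l : ℤ) {x : ℝ}
    (h1 : arcsin γ + 2*(l:ℝ)*π ≤ x) (h2 : x ≤ π - arcsin γ + 2*(l:ℝ)*π) :
    γ ≤ Real.sin x := by
  rw [← Real.sin_sub_int_mul_two_pi x l]
  exact gamma_le_sin hγ0 hγ1 (by push_cast; linarith) (by push_cast; linarith)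

private lemma Uw_monotoneOn {γ : ℝ} (hγ0 : 0 < γ) (hγ1 : γ < 1) (l : ℤ) :
    MonotoneOn (Uw γ) (Icc (arcsin γ + 2*(l:ℝ)*π) (π - arcsin γ + 2*(l:ℝ)*π)) := by
  apply monotoneOn_of_deriv_nonneg (convex_Icc _ _) (continuous_Uw γ).continuousOn
  · exact fun x _ => ((hasDerivAt_Uw γ x).differentiableAt).differentiableWithinAt
  · intro x hx
    rw [interior_Icc] at hx
    rw [(hasDerivAt_Uw γ x).deriv]
    have := gamma_le_sin_shift hγ0 hγ1 l hx.1.le hx.2.le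
    linarith

private lemma Uw_antitoneOn {γ : ℝ} (hγ0 : 0 < γ) (hγ1 : γ < 1) (l : ℤ) :
    AntitoneOn (Uw γ) (Icc (π - arcsin γ + 2*((l:ℝ)-1)*π) (arcsin γ + 2*(l:ℝ)*π)) := by
  apply antitoneOn_of_deriv_nonpos (convex_Icc _ _) (continuous_Uw γ).continuousOn
  · exact fun x _ => ((hasDerivAt_Uw γ x).differentiableAt).differentiableWithinAt
  · intro x hx
    rw [interior_Icc] at hx
    rw [(hasDerivAt_Uw γ x).deriv]
    have := sin_lt_gamma_shift hγ0 hγ1 l hx.1 hx.2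
    linarith

private lemma gamma_lt_sin {γ : ℝ} (hγ0 : 0 < γ) (hγ1 : γ < 1) {y : ℝ}
    (h1 : arcsin γ < y) (h2 : y < π - arcsin γ) : γ < Real.sin y := by
  have hπ := Real.pi_pos
  have ha0 : 0 < arcsin γ := Real.arcsin_pos.mpr hγ0
  have ha2 : arcsin γ < π / 2 := Real.arcsin_lt_pi_div_two.mpr hγ1
  have hsa : Real.sin (arcsin γ) = γ := Real.sin_arcsin (by linarith) hγ1.le
  rcases le_or_gt y (π/2) with hy | hy
  · have := Real.strictMonoOn_sin
      (by constructor <;> linarith : arcsin γ ∈ Icc (-(π/2)) (π/2))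
      (by constructor <;> linarith : y ∈ Icc (-(π/2)) (π/2)) h1
    rwa [hsa] at this
  · rw [← Real.sin_pi_sub]
    have := Real.strictMonoOn_sin
      (by constructor <;> linarith : arcsin γ ∈ Icc (-(π/2)) (π/2))
      (by constructor <;> linarith : π - y ∈ Icc (-(π/2)) (π/2)) (by linarith)
    rwa [hsa] at this

private lemma gamma_lt_sin_shift {γ : ℝ} (hγ0 : 0 < γ) (hγ1 : γ < 1) (l : ℤ) {x : ℝ}
    (h1 : arcsin γ + 2*(l:ℝ)*π < x) (h2 : x < π - arcsin γ + 2*(l:ℝ)*π) :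
    γ < Real.sin x := by
  rw [← Real.sin_sub_int_mul_two_pi x l]
  exact gamma_lt_sin hγ0 hγ1 (by linarith) (by linarith)

private lemma Uw_strictMonoOn {γ : ℝ} (hγ0 : 0 < γ) (hγ1 : γ < 1) (l : ℤ) :
    StrictMonoOn (Uw γ) (Icc (arcsin γ + 2*(l:ℝ)*π) (π - arcsin γ + 2*(l:ℝ)*π)) := by
  apply strictMonoOn_of_deriv_pos (convex_Icc _ _) (continuous_Uw γ).continuousOn
  intro x hx
  rw [interior_Icc] at hx
  rw [(hasDerivAt_Uw γ x).deriv]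
  have := gamma_lt_sin_shift hγ0 hγ1 l hx.1 hx.2
  linarith

private lemma neg_left_of_deriv_pos {f : ℝ → ℝ} {x d : ℝ} (hf : HasDerivAt f d x)
    (hfx : f x = 0) (hd : 0 < d) : ∃ u < x, ∀ y ∈ Set.Ioo u x, f y < 0 := by
  have hs := hasDerivAt_iff_tendsto_slope.mp hf
  have hpos : ∀ᶠ y in nhdsWithin x {x}ᶜ, 0 < slope f x y := hs.eventually (lt_mem_nhds hd)
  have hpos' : ∀ᶠ y in nhdsWithin x (Iio x), 0 < slope f x y :=
    hpos.filter_mono (nhdsWithin_mono x (fun y hy => ne_of_lt hy))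
  obtain ⟨u, hu, hsub⟩ := mem_nhdsLT_iff_exists_Ioo_subset.mp hpos'
  refine ⟨u, hu, fun y hy => ?_⟩
  have h1 : 0 < slope f x y := hsub hy
  rw [slope_def_field, hfx, sub_zero] at h1
  rcases div_pos_iff.mp h1 with ⟨_, h⟩ | ⟨h, _⟩
  · linarith [hy.2]
  · exact h

private lemma deriv_nonpos_of_neg_right {f : ℝ → ℝ} {x d b : ℝ} (hf : HasDerivAt f d x)
    (hfx : f x = 0) (hxb : x < b) (hneg : ∀ y, x < y → y < b → f y < 0) : d ≤ 0 := by
  have hs := hasDerivAt_iff_tendsto_slope.mp hf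
  have hs' : Filter.Tendsto (slope f x) (nhdsWithin x (Ioi x)) (nhds d) :=
    hs.mono_left (nhdsWithin_mono x (fun y hy => ne_of_gt hy))
  refine le_of_tendsto hs' ?_
  filter_upwards [Ioo_mem_nhdsGT_of_mem (⟨le_rfl, hxb⟩ : x ∈ Ico x b)] with y hy
  rw [slope_def_field, hfx, sub_zero]
  exact le_of_lt (div_neg_of_neg_of_pos (hneg y hy.1 hy.2) (by linarith [hy.1]))
set_option maxHeartbeats 2000000 in
/-- For a C² solution of the reduced travelling-wave ODE
`g'' + μ g' + sin g - γ = 0` (with `μ ≥ 0`, `0 < γ < 1`): if `g(ξ_k)` is a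
local maximum point `π - arcsin γ + 2kπ` of the washboard potential and at
every `ξ ≤ ξ_k` where `g(ξ)` equals some local maximum point
`π - arcsin γ + 2lπ` one has `g'(ξ) > 0`, then `g'(ξ) > 0` for all
`ξ ≤ ξ_k`. -/
theorem reducedODE_rightward_before_maximum
    (μ γ : ℝ) (hμ : 0 ≤ μ) (hγ0 : 0 < γ) (hγ1 : γ < 1)
    (g : ℝ → ℝ) (hg : ContDiff ℝ 2 g)
    (heq : ∀ ξ : ℝ,
        deriv (deriv g) ξ + μ * deriv g ξ + Real.sin (g ξ) - γ = 0)
    (ξk : ℝ) (k : ℤ) (hval : g ξk = π - Real.arcsin γ + 2 * k * π)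
    (hmax : ∀ ξ : ℝ, ξ ≤ ξk →
        (∃ l : ℤ, g ξ = π - Real.arcsin γ + 2 * l * π) → 0 < deriv g ξ) :
    ∀ ξ : ℝ, ξ ≤ ξk → 0 < deriv g ξ := by
  have hπ := Real.pi_pos
  have ha0 : 0 < arcsin γ := Real.arcsin_pos.mpr hγ0
  have ha2 : arcsin γ < π / 2 := Real.arcsin_lt_pi_div_two.mpr hγ1
  -- differentiability
  have hg2 : ContDiff ℝ (1 + 1) g := by norm_num; exact hg
  have hg' : ContDiff ℝ 1 (deriv g) := (contDiff_succ_iff_deriv.mp hg2).2.2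
  have hdg : Differentiable ℝ g := hg.differentiable (by norm_num)
  have hddg : Differentiable ℝ (deriv g) := hg'.differentiable (by norm_num)
  have hcg : Continuous g := hdg.continuous
  have hcg' : Continuous (deriv g) := hddg.continuous
  -- energy
  set e : ℝ → ℝ := fun ξ => (deriv g ξ)^2 / 2 + Uw γ (g ξ) with he
  have heD : ∀ ξ, HasDerivAt e (-μ * (deriv g ξ)^2) ξ := by
    intro ξ
    have h1 : HasDerivAt (fun x => (deriv g x)^2 / 2)
        ((2 * deriv g ξ ^ 1 * deriv (deriv g) ξ) / 2) ξ :=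
      ((hddg ξ).hasDerivAt.pow 2).div_const 2
    have h2 : HasDerivAt (fun x => Uw γ (g x)) ((Real.sin (g ξ) - γ) * deriv g ξ) ξ :=
      (hasDerivAt_Uw γ (g ξ)).comp ξ (hdg ξ).hasDerivAt
    have h3 := h1.add h2
    exact h3.congr_deriv (by linear_combination (deriv g ξ) * heq ξ)
  have heAnti : Antitone e := by
    apply antitone_of_deriv_nonpos (fun ξ => (heD ξ).differentiableAt)
    intro ξ
    rw [(heD ξ).deriv]
    nlinarith [sq_nonneg (deriv g ξ)]
  have hkpos : 0 < deriv g ξk := hmax ξk le_rfl ⟨k, hval⟩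
  by_contra hcon
  push_neg at hcon
  obtain ⟨ξ0, hξ0k, hξ0⟩ := hcon
  -- last time with nonpositive velocity
  set S : Set ℝ := Icc ξ0 ξk ∩ {x | deriv g x ≤ 0} with hS
  have hSc : IsCompact S := isCompact_Icc.inter_right (isClosed_le hcg' continuous_const)
  have hSne : S.Nonempty := ⟨ξ0, ⟨le_rfl, hξ0k⟩, hξ0⟩
  set ξ1 : ℝ := sSup S with hξ1def
  have hξ1S : ξ1 ∈ S := hSc.sSup_mem hSne
  have hub : ∀ x ∈ S, x ≤ ξ1 := fun x hx => le_csSup hSc.bddAbove hx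
  have hξ1k : ξ1 ≤ ξk := hξ1S.1.2
  have h01 : ξ0 ≤ ξ1 := hξ1S.1.1
  have hgpos : ∀ x, ξ1 < x → x ≤ ξk → 0 < deriv g x := by
    intro x h1 h2
    by_contra h
    push_neg at h
    exact absurd (hub x ⟨⟨le_trans h01 h1.le, h2⟩, h⟩) (not_le.mpr h1)
  have hξ1k' : ξ1 < ξk := by
    rcases lt_or_eq_of_le hξ1k with h | h
    · exact h
    · exfalso; rw [h] at hξ1S; have := hξ1S.2; simp only [mem_setOf_eq] at this; linarith
  have hd1 : deriv g ξ1 = 0 := by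
    have hle : deriv g ξ1 ≤ 0 := hξ1S.2
    rcases lt_or_eq_of_le hle with h | h
    · exfalso
      obtain ⟨ζ, hζ, hζ0⟩ := intermediate_value_Ioo hξ1k'.le hcg'.continuousOn
        (show (0:ℝ) ∈ Ioo (deriv g ξ1) (deriv g ξk) from ⟨h, hkpos⟩)
      exact absurd (hub ζ ⟨⟨le_trans h01 hζ.1.le, hζ.2.le⟩, le_of_eq hζ0⟩)
        (not_le.mpr hζ.1)
    · exact h
  -- strict monotonicity after ξ1
  have hSM : StrictMonoOn g (Icc ξ1 ξk) := by
    apply strictMonoOn_of_deriv_pos (convex_Icc _ _) hcg.continuousOn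
    intro x hx
    rw [interior_Icc] at hx
    exact hgpos x hx.1 hx.2.le
  have hg1k : g ξ1 < g ξk := hSM ⟨le_rfl, hξ1k'.le⟩ ⟨hξ1k'.le, le_rfl⟩ hξ1k'
  -- the well index l
  set r : ℝ := (g ξ1 - (π - arcsin γ)) / (2*π) with hr
  set l : ℤ := ⌊r⌋ + 1 with hl
  have hll : ((l:ℝ) - 1) = (⌊r⌋ : ℝ) := by push_cast [hl]; ring
  have h2pi : (0:ℝ) < 2*π := by linarith
  have hMl1 : π - arcsin γ + 2*((l:ℝ)-1)*π ≤ g ξ1 := by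
    have h : (⌊r⌋:ℝ) ≤ r := Int.floor_le r
    have h2 : (⌊r⌋:ℝ) * (2*π) ≤ g ξ1 - (π - arcsin γ) := by
      calc (⌊r⌋:ℝ) * (2*π) ≤ r * (2*π) := mul_le_mul_of_nonneg_right h h2pi.le
        _ = g ξ1 - (π - arcsin γ) := by rw [hr]; field_simp
    rw [hll]; linarith
  have hMl : g ξ1 < π - arcsin γ + 2*(l:ℝ)*π := by
    have h : r < (⌊r⌋:ℝ) + 1 := Int.lt_floor_add_one r
    have h2 : g ξ1 - (π - arcsin γ) < ((⌊r⌋:ℝ) + 1) * (2*π) := by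
      calc g ξ1 - (π - arcsin γ) = r * (2*π) := by rw [hr]; field_simp
        _ < ((⌊r⌋:ℝ) + 1) * (2*π) := by apply mul_lt_mul_of_pos_right h h2pi
    have h3 : ((l:ℝ)) = (⌊r⌋:ℝ) + 1 := by push_cast [hl]; ring
    rw [h3]; linarith
  have hlk : l ≤ k := by
    have h : π - arcsin γ + 2*((l:ℝ)-1)*π < π - arcsin γ + 2*(k:ℝ)*π := by
      rw [hval] at hg1k
      calc π - arcsin γ + 2*((l:ℝ)-1)*π ≤ g ξ1 := hMl1
        _ < π - arcsin γ + 2*(k:ℝ)*π := by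
            have : (2:ℝ) * k * π = 2*(k:ℝ)*π := by ring
            linarith [hg1k]
    have h2 : ((l:ℝ) - 1) < (k:ℝ) := by nlinarith
    have h3 : (l:ℤ) - 1 < k := by exact_mod_cast h2
    omega
  have hMl1' : π - arcsin γ + 2*((l:ℝ)-1)*π < g ξ1 := by
    rcases lt_or_eq_of_le hMl1 with h | h
    · exact h
    · exfalso
      have := hmax ξ1 hξ1k ⟨l - 1, by push_cast; linarith⟩
      linarith [hd1, this]
  -- crossing of the barrier M l after ξ1
  have hMlk : π - arcsin γ + 2*(l:ℝ)*π ≤ g ξk := by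
    rw [hval]
    have hlk' : (l:ℝ) ≤ (k:ℝ) := by exact_mod_cast hlk
    nlinarith
  obtain ⟨ξ2, hξ2mem, hgξ2⟩ : ∃ ξ2 ∈ Ioc ξ1 ξk, g ξ2 = π - arcsin γ + 2*(l:ℝ)*π := by
    have h := intermediate_value_Ioc hξ1k'.le hcg.continuousOn
      (show π - arcsin γ + 2*(l:ℝ)*π ∈ Ioc (g ξ1) (g ξk) from ⟨hMl, hMlk⟩)
    obtain ⟨ξ2, h1, h2⟩ := h
    exact ⟨ξ2, h1, h2⟩
  have hd2 : 0 < deriv g ξ2 := hgpos ξ2 hξ2mem.1 hξ2mem.2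
  -- energy comparisons
  have he2 : Uw γ (π - arcsin γ + 2*(l:ℝ)*π) < e ξ2 := by
    rw [he]
    simp only
    rw [hgξ2]
    nlinarith [hd2]
  have he1 : e ξ1 = Uw γ (g ξ1) := by
    have : e ξ1 = (deriv g ξ1)^2/2 + Uw γ (g ξ1) := rfl
    rw [this, hd1]
    norm_num
  have hU1 : Uw γ (π - arcsin γ + 2*(l:ℝ)*π) < Uw γ (g ξ1) := by
    calc Uw γ (π - arcsin γ + 2*(l:ℝ)*π) < e ξ2 := he2
      _ ≤ e ξ1 := heAnti hξ2mem.1.le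
      _ = Uw γ (g ξ1) := he1
  have hCM : arcsin γ + 2*(l:ℝ)*π < π - arcsin γ + 2*(l:ℝ)*π := by linarith
  -- g ξ1 is below the center of the well
  have hC1 : g ξ1 < arcsin γ + 2*(l:ℝ)*π := by
    by_contra h
    push_neg at h
    have := (Uw_strictMonoOn hγ0 hγ1 l).monotoneOn ⟨h, hMl.le⟩
      ⟨hCM.le, le_rfl⟩ hMl.le
    linarith
  have hsin1 : Real.sin (g ξ1) < γ := sin_lt_gamma_shift hγ0 hγ1 l hMl1' hC1
  have hdd1 : 0 < deriv (deriv g) ξ1 := by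
    have h := heq ξ1
    rw [hd1] at h
    linarith
  -- g' is negative shortly before ξ1
  obtain ⟨u, huξ1, hu⟩ : ∃ u < ξ1, ∀ y ∈ Ioo u ξ1, deriv g y < 0 :=
    neg_left_of_deriv_pos (hddg ξ1).hasDerivAt hd1 hdd1
  by_cases hT : ∃ x, x < ξ1 ∧ 0 ≤ deriv g x
  · -- Case: there is a turning point before ξ1
    set T : Set ℝ := {x | x < ξ1 ∧ 0 ≤ deriv g x} with hTdef
    have hTne : T.Nonempty := hT
    have hTub : ∀ x ∈ T, x ≤ u := by
      intro x hx
      by_contra hxu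
      push_neg at hxu
      exact absurd hx.2 (not_le.mpr (hu x ⟨hxu, hx.1⟩))
    have hTbdd : BddAbove T := ⟨u, hTub⟩
    set τ : ℝ := sSup T with hτdef
    have hτu : τ ≤ u := csSup_le hTne hTub
    have hτξ1 : τ < ξ1 := lt_of_le_of_lt hτu huξ1
    have hτcl : τ ∈ closure T := (isLUB_csSup hTne hTbdd).mem_closure hTne
    have hτge : 0 ≤ deriv g τ := by
      have hsub : closure T ⊆ {x | 0 ≤ deriv g x} :=
        closure_minimal (fun x hx => hx.2) (isClosed_le continuous_const hcg')
      exact hsub hτcl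
    have hneg : ∀ x, τ < x → x < ξ1 → deriv g x < 0 := by
      intro x h1 h2
      by_contra h
      push_neg at h
      exact absurd (le_csSup hTbdd (⟨h2, h⟩ : x ∈ T)) (not_le.mpr h1)
    have hdτ : deriv g τ = 0 := by
      refine le_antisymm ?_ hτge
      have hsub : closure (Ioo τ ξ1) ⊆ {x | deriv g x ≤ 0} :=
        closure_minimal (fun x hx => (hneg x hx.1 hx.2).le)
          (isClosed_le hcg' continuous_const)
      have : τ ∈ closure (Ioo τ ξ1) := by
        rw [closure_Ioo (ne_of_lt hτξ1)]
        exact ⟨le_rfl, hτξ1.le⟩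
      exact hsub this
    have hddτ : deriv (deriv g) τ ≤ 0 :=
      deriv_nonpos_of_neg_right (hddg τ).hasDerivAt hdτ hτξ1 hneg
    have hsinτ : γ ≤ Real.sin (g τ) := by
      have h := heq τ
      rw [hdτ, mul_zero] at h
      linarith
    have hAnti : StrictAntiOn g (Icc τ ξ1) := by
      apply strictAntiOn_of_deriv_neg (convex_Icc _ _) hcg.continuousOn
      intro x hx
      rw [interior_Icc] at hx
      exact hneg x hx.1 hx.2
    have hgτ1 : g ξ1 < g τ := hAnti ⟨le_rfl, hτξ1.le⟩ ⟨hτξ1.le, le_rfl⟩ hτξ1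
    have hτk : τ ≤ ξk := le_trans hτξ1.le hξ1k
    have hgτM : g τ < π - arcsin γ + 2*(l:ℝ)*π := by
      rcases lt_trichotomy (g τ) (π - arcsin γ + 2*(l:ℝ)*π) with h | h | h
      · exact h
      · exfalso
        have := hmax τ hτk ⟨l, by push_cast; linarith⟩
        linarith [hdτ]
      · exfalso
        obtain ⟨σ, hσmem, hgσ⟩ := intermediate_value_Icc' hτξ1.le hcg.continuousOn
          (show π - arcsin γ + 2*(l:ℝ)*π ∈ Icc (g ξ1) (g τ) from ⟨hMl.le, h.le⟩)
        have hσ1 : σ ≠ ξ1 := by intro hh; rw [hh] at hgσ; linarith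
        have hστ : σ ≠ τ := by intro hh; rw [hh] at hgσ; linarith
        have hσlt : σ < ξ1 := lt_of_le_of_ne hσmem.2 hσ1
        have hστ' : τ < σ := lt_of_le_of_ne hσmem.1 (Ne.symm hστ)
        have := hmax σ (le_trans hσlt.le hξ1k) ⟨l, by push_cast; linarith⟩
        linarith [hneg σ hστ' hσlt]
    have hgτC : arcsin γ + 2*(l:ℝ)*π ≤ g τ := by
      by_contra h
      push_neg at h
      have := sin_lt_gamma_shift hγ0 hγ1 l (by linarith : π - arcsin γ + 2*((l:ℝ)-1)*π < g τ) h
      linarith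
    have hUτ : Uw γ (g τ) ≤ Uw γ (π - arcsin γ + 2*(l:ℝ)*π) :=
      (Uw_strictMonoOn hγ0 hγ1 l).monotoneOn ⟨hgτC, hgτM.le⟩ ⟨hCM.le, le_rfl⟩ hgτM.le
    have heτ : e τ = Uw γ (g τ) := by
      have : e τ = (deriv g τ)^2/2 + Uw γ (g τ) := rfl
      rw [this, hdτ]
      norm_num
    have : e ξ2 ≤ e τ := heAnti (le_trans hτξ1.le hξ2mem.1.le)
    linarith
  · -- Case: g' < 0 on all of (-∞, ξ1)
    push_neg at hT
    have hneg : ∀ x, x < ξ1 → deriv g x < 0 := hT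
    have hAnti : StrictAntiOn g (Iic ξ1) := by
      apply strictAntiOn_of_deriv_neg (convex_Iic _) hcg.continuousOn
      intro x hx
      rw [interior_Iic] at hx
      exact hneg x hx
    have hmono2 : ∀ x y, x ≤ y → y ≤ ξ1 → g y ≤ g x := by
      intro x y hxy hy
      rcases lt_or_eq_of_le hxy with h | h
      · exact (hAnti (le_trans hxy hy : x ∈ Iic ξ1) (hy : y ∈ Iic ξ1) h).le
      · rw [h]
    have hlt : ∀ x ≤ ξ1, g x < π - arcsin γ + 2*(l:ℝ)*π := by
      intro x hx
      by_contra h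
      push_neg at h
      have hx1 : x ≠ ξ1 := by intro hh; rw [hh] at h; linarith
      have hx1' : x < ξ1 := lt_of_le_of_ne hx hx1
      obtain ⟨σ, hσmem, hgσ⟩ := intermediate_value_Icc' hx1'.le hcg.continuousOn
        (⟨hMl.le, h⟩ : π - arcsin γ + 2*(l:ℝ)*π ∈ Icc (g ξ1) (g x))
      have hσ1 : σ ≠ ξ1 := by intro hh; rw [hh] at hgσ; linarith
      have hσlt : σ < ξ1 := lt_of_le_of_ne hσmem.2 hσ1
      have := hmax σ (le_trans hσlt.le hξ1k) ⟨l, by push_cast; linarith⟩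
      linarith [hneg σ hσlt]
    have hUCM : Uw γ (arcsin γ + 2*(l:ℝ)*π) < Uw γ (π - arcsin γ + 2*(l:ℝ)*π) :=
      Uw_strictMonoOn hγ0 hγ1 l ⟨le_rfl, hCM.le⟩ ⟨hCM.le, le_rfl⟩ hCM
    obtain ⟨y, hymem, hUy⟩ := intermediate_value_Icc' hC1.le (continuous_Uw γ).continuousOn
      (⟨hUCM.le, hU1.le⟩ : Uw γ (π - arcsin γ + 2*(l:ℝ)*π) ∈
        Icc (Uw γ (arcsin γ + 2*(l:ℝ)*π)) (Uw γ (g ξ1)))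
    have hy1 : g ξ1 < y := by
      rcases lt_or_eq_of_le hymem.1 with h | h
      · exact h
      · exfalso; rw [← h] at hUy; linarith
    have hyC : y < arcsin γ + 2*(l:ℝ)*π := by
      rcases lt_or_eq_of_le hymem.2 with h | h
      · exact h
      · exfalso; rw [h] at hUy; linarith
    by_cases hy5 : ∃ x ≤ ξ1, y ≤ g x
    · -- the trajectory stays above y before ξ5 and escapes to +∞ backwards
      obtain ⟨ξ5, hξ5, hgξ5⟩ := hy5
      have hξ5lt : ξ5 < ξ1 := by
        rcases lt_or_eq_of_le hξ5 with h | h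
        · exact h
        · exfalso; rw [h] at hgξ5; linarith
      set c2 : ℝ := 2*(Uw γ (g ξ1) - Uw γ (π - arcsin γ + 2*(l:ℝ)*π)) with hc2def
      have hc2 : 0 < c2 := by rw [hc2def]; linarith
      have hcpos : 0 < Real.sqrt c2 := Real.sqrt_pos.mpr hc2
      have hclaim : ∀ x ≤ ξ5, deriv g x ≤ -Real.sqrt c2 := by
        intro x hx
        have hgx1 : y ≤ g x := le_trans hgξ5 (hmono2 x ξ5 hx hξ5)
        have hgxM : g x < π - arcsin γ + 2*(l:ℝ)*π := hlt x (le_trans hx hξ5)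
        have hUx : Uw γ (g x) ≤ Uw γ (π - arcsin γ + 2*(l:ℝ)*π) := by
          rcases le_or_gt (g x) (arcsin γ + 2*(l:ℝ)*π) with h | h
          · calc Uw γ (g x) ≤ Uw γ y :=
                Uw_antitoneOn hγ0 hγ1 l
                  ⟨le_trans hMl1'.le hy1.le, hyC.le⟩
                  ⟨le_trans (le_trans hMl1'.le hy1.le) hgx1, h⟩ hgx1
              _ = Uw γ (π - arcsin γ + 2*(l:ℝ)*π) := hUy
          · exact (Uw_strictMonoOn hγ0 hγ1 l).monotoneOn ⟨h.le, hgxM.le⟩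
              ⟨hCM.le, le_rfl⟩ hgxM.le
        have hex : e ξ1 ≤ e x := heAnti (le_trans hx hξ5)
        have hsq : c2 ≤ (deriv g x)^2 := by
          have hh : e x = (deriv g x)^2/2 + Uw γ (g x) := rfl
          rw [hh, he1] at hex
          rw [hc2def]
          linarith
        have hneg' : deriv g x < 0 := hneg x (lt_of_le_of_lt hx hξ5lt)
        by_contra hcon2
        push_neg at hcon2
        nlinarith [Real.sq_sqrt hc2.le]
      exact escape_lemma hdg hcpos hclaim (fun x hx => hlt x (le_trans hx hξ5))
    · -- the trajectory stays below y : uniformly positive force pushes g' to -∞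
      push_neg at hy5
      obtain ⟨x₀, hx₀mem, hx₀max⟩ := isCompact_Icc.exists_isMaxOn
        (nonempty_Icc.mpr hy1.le : (Icc (g ξ1) y).Nonempty) continuous_sin.continuousOn
      set δ : ℝ := γ - Real.sin x₀ with hδdef
      have hδ : 0 < δ := by
        have h1 : Real.sin x₀ < γ := sin_lt_gamma_shift hγ0 hγ1 l
          (lt_of_lt_of_le hMl1' hx₀mem.1) (lt_of_le_of_lt hx₀mem.2 hyC)
        rw [hδdef]; linarith
      have hdd : ∀ x ≤ ξ1, δ ≤ deriv (deriv g) x := by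
        intro x hx
        have h := heq x
        have hgx : g x ∈ Icc (g ξ1) y := ⟨hmono2 x ξ1 hx le_rfl, (hy5 x hx).le⟩
        have hsin : Real.sin (g x) ≤ Real.sin x₀ := hx₀max hgx
        have hdgx : deriv g x ≤ 0 := by
          rcases lt_or_eq_of_le hx with hh | hh
          · exact (hneg x hh).le
          · rw [hh, hd1]
        nlinarith [mul_nonneg hμ (neg_nonneg.mpr hdgx)]
      have hmono3 : MonotoneOn (fun x => deriv g x - δ * x) (Iic ξ1) := by
        apply monotoneOn_of_deriv_nonneg (convex_Iic _)
        · exact (hcg'.sub (continuous_const.mul continuous_id)).continuousOn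
        · exact (hddg.sub (differentiable_id.const_mul δ)).differentiableOn
        · intro x hx
          rw [interior_Iic] at hx
          have hder : deriv (fun x => deriv g x - δ * x) x = deriv (deriv g) x - δ := by
            have := ((hddg x).hasDerivAt.sub ((hasDerivAt_id x).const_mul δ)).deriv
            simp at this; exact this
          rw [hder]
          linarith [hdd x hx.le]
      have hclaim : ∀ x ≤ ξ1 - 1, deriv g x ≤ -δ := by
        intro x hx
        have h := hmono3 (show x ∈ Iic ξ1 by simp only [mem_Iic]; linarith)
          (show ξ1 ∈ Iic ξ1 by simp) (by linarith)
        simp only at h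
        rw [hd1] at h
        nlinarith
      exact escape_lemma hdg hδ hclaim (fun x hx => hy5 x (by linarith))
end
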